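/- Let p be a prime and let ρ_1, …, ρ_n ∈ ℤ² be primitive vectors (the two coordinates of each ρ_i have greatest common divisor 1) admitting positive integers b_1, …, b_n with b_1ρ_1 + … + b_nρ_n = 0. Denote by ρ̄_i the reduction of ρ_i modulo p. Suppose there exist indices m ≠ l such that {ρ̄_m, ρ̄_l} is an 𝔽_p-basis of the 𝔽_p-span of {ρ̄_1, …, ρ̄_n}, and moreover either (b1) there exists an index k with ρ̄_k = a·ρ̄_m + b·ρ̄_l for some a, b ∈ ℤ/pℤ both nonzero, or (b2) there exists an index s ≠ m with ρ̄_s a nonzero scalar multiple of ρ̄_m and an index t ≠ l with ρ̄_t a nonzero scalar multiple of ρ̄_l. Then there exist positive integers c_1, …, c_n such that c_1ρ_1 + … + c_nρ_n = 0, the subgroup M of ℤ² generated by c_1ρ_1, …, c_nρ_n has finite index in ℤ², and ℤ²/M has no p-torsion, i.e. for every x ∈ ℤ², if p·x ∈ M then x ∈ M. -/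

import Mathlib

/-- Coordinatewise reduction modulo `p` of a family of vectors in `ℤ²`. -/
def redMod (p : ℕ) {n : ℕ} (ρ : Fin n → (Fin 2 → ℤ)) : Fin n → (Fin 2 → ZMod p) :=
  fun i k => (ρ i k : ZMod p)

/-- Cramer identity in rank 2. -/
lemma cramer2 (u v x : Fin 2 → ℤ) :
    (u 0 * v 1 - u 1 * v 0) • x
      = (x 0 * v 1 - x 1 * v 0) • u + (u 0 * x 1 - u 1 * x 0) • v := by
  funext i
  fin_cases i <;>
    simp only [Pi.add_apply, Pi.smul_apply, smul_eq_mul, Fin.isValue, Fin.mk_zero, Fin.mk_one] <;> ring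

lemma pair_det_ne {K : Type*} [Field K] (u v : Fin 2 → K)
    (h : LinearIndependent K ![u, v]) : u 0 * v 1 - u 1 * v 0 ≠ 0 := by
  rw [LinearIndependent.pair_iff] at h
  intro hd
  have h0 := h (v 0) (-(u 0)) (by
    funext i; fin_cases i <;> simp only [Pi.add_apply, Pi.smul_apply, smul_eq_mul,
      Pi.zero_apply, Fin.isValue, Fin.mk_zero, Fin.mk_one] <;> first | ring1 | linear_combination hd | linear_combination -hd)
  have h1 := h (v 1) (-(u 1)) (by
    funext i; fin_cases i <;> simp only [Pi.add_apply, Pi.smul_apply, smul_eq_mul,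
      Pi.zero_apply, Fin.isValue, Fin.mk_zero, Fin.mk_one] <;> first | ring1 | linear_combination hd | linear_combination -hd)
  have hu0 : u 0 = 0 := by have := h0.2; simpa using this
  have hu1 : u 1 = 0 := by have := h1.2; simpa using this
  have := h 1 0 (by
    funext i; fin_cases i <;> simp [hu0, hu1])
  exact one_ne_zero this.1

/-- Perturbation construction: add a bounded relation to a huge multiple of `p·b`. -/
lemma construct {n : ℕ} (p : ℕ) (hp : 0 < p) (ρ : Fin n → (Fin 2 → ℤ))
    (b : Fin n → ℤ) (hbpos : ∀ i, 0 < b i) (hbrel : ∑ i, b i • ρ i = 0)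
    (r : Fin n → ℤ) (hrrel : ∑ i, r i • ρ i = 0) (S : ℤ) (hS : ∀ i, |r i| ≤ S) :
    ∃ c : Fin n → ℤ, (∀ i, 0 < c i) ∧ (∑ i, c i • ρ i = 0) ∧
      ∀ i, (c i : ZMod p) = (r i : ZMod p) := by
  refine ⟨fun i => (p * (1 + S)) * b i + r i, ?_, ?_, ?_⟩
  · intro i
    have h1 : |r i| ≤ S := hS i
    have h2 : (0:ℤ) ≤ S := le_trans (abs_nonneg _) h1
    have h3 : (1:ℤ) ≤ b i := hbpos i
    have hp' : (1:ℤ) ≤ (p:ℤ) := by exact_mod_cast hp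
    have habs := abs_le.1 h1
    have h0 : (0:ℤ) ≤ 1 + S := by linarith
    have k1 : (1 + S) ≤ (p:ℤ) * (1 + S) := le_mul_of_one_le_left h0 hp'
    have k2 : (p:ℤ) * (1 + S) ≤ (p:ℤ) * (1 + S) * b i :=
      le_mul_of_one_le_right (mul_nonneg (by positivity) h0) h3
    have key : (1 + S) ≤ ((p:ℤ) * (1 + S)) * b i := le_trans k1 k2
    show 0 < (p * (1 + S)) * b i + r i
    linarith [habs.1]
  · have : ∀ i, ((p * (1 + S)) * b i + r i) • ρ i
        = (p * (1 + S)) • (b i • ρ i) + r i • ρ i := by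
      intro i; rw [add_smul, mul_smul]
    simp only [this, Finset.sum_add_distrib, ← Finset.smul_sum, hbrel, hrrel,
      smul_zero, add_zero]
  · intro i
    push_cast
    simp [ZMod.natCast_self]

/-- From a positive relation whose terms contain a pair with determinant prime to `p`,
conclude finite index and `p`-torsion-freeness. -/
lemma final {n : ℕ} (p : ℕ) (hp : p.Prime) (ρ : Fin n → (Fin 2 → ℤ))
    (c : Fin n → ℤ) (hpos : ∀ k, 0 < c k) (hrel : ∑ k, c k • ρ k = 0)
    (i j : Fin n)
    (hdet : ((c i * c j * (ρ i 0 * ρ j 1 - ρ i 1 * ρ j 0) : ℤ) : ZMod p) ≠ 0) :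
    (Submodule.span ℤ (Set.range fun k => c k • ρ k)).toAddSubgroup.FiniteIndex ∧
      ∀ x : Fin 2 → ℤ, (p : ℤ) • x ∈ Submodule.span ℤ (Set.range fun k => c k • ρ k) →
        x ∈ Submodule.span ℤ (Set.range fun k => c k • ρ k) := by
  set M := Submodule.span ℤ (Set.range fun k => c k • ρ k) with hM
  set u : Fin 2 → ℤ := c i • ρ i with hu
  set v : Fin 2 → ℤ := c j • ρ j with hv
  have hum : u ∈ M := Submodule.subset_span ⟨i, rfl⟩
  have hvm : v ∈ M := Submodule.subset_span ⟨j, rfl⟩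
  set D : ℤ := u 0 * v 1 - u 1 * v 0 with hD
  have hDeq : D = c i * c j * (ρ i 0 * ρ j 1 - ρ i 1 * ρ j 0) := by
    simp only [hD, hu, hv, Pi.smul_apply, smul_eq_mul]; ring
  have hDp : ((D : ℤ) : ZMod p) ≠ 0 := by rw [hDeq]; exact hdet
  have hDne : D ≠ 0 := by
    intro h; rw [h] at hDp; exact hDp (by push_cast; rfl)
  have hpD : ¬ ((p : ℤ) ∣ D) := fun h => hDp ((ZMod.intCast_zmod_eq_zero_iff_dvd D p).2 h)
  -- every multiple of D of any vector lies in M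
  have hDsmul : ∀ x : Fin 2 → ℤ, D • x ∈ M := by
    intro x
    rw [cramer2 u v x]
    exact M.add_mem (M.smul_mem _ hum) (M.smul_mem _ hvm)
  have hDdvd_mem : ∀ y : Fin 2 → ℤ, (∀ k, D ∣ y k) → y ∈ M := by
    intro y hy
    have : y = D • (fun k => y k / D) := by
      funext k
      simp only [Pi.smul_apply, smul_eq_mul]
      exact (Int.mul_ediv_cancel' (hy k)).symm
    rw [this]; exact hDsmul _
  constructor
  · -- finite index
    set d : ℕ := D.natAbs with hd
    have hdpos : 0 < d := Int.natAbs_pos.2 hDne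
    haveI : NeZero d := ⟨hdpos.ne'⟩
    have hsurj : Function.Surjective
        (fun ab : Fin d × Fin d =>
          (QuotientAddGroup.mk ![(ab.1 : ℤ), (ab.2 : ℤ)] :
            (Fin 2 → ℤ) ⧸ M.toAddSubgroup)) := by
      intro q
      induction q using QuotientAddGroup.induction_on with
      | H x =>
        have hd' : (0:ℤ) < (d:ℤ) := by exact_mod_cast hdpos
        refine ⟨⟨⟨(x 0 % d).toNat, ?_⟩, ⟨(x 1 % d).toNat, ?_⟩⟩, ?_⟩
        · have := Int.emod_lt_of_pos (x 0) hd'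
          have h0 := Int.emod_nonneg (x 0) hd'.ne'
          omega
        · have := Int.emod_lt_of_pos (x 1) hd'
          have h0 := Int.emod_nonneg (x 1) hd'.ne'
          omega
        · apply QuotientAddGroup.eq.2
          rw [Submodule.mem_toAddSubgroup]
          apply hDdvd_mem
          intro k
          have hdvd : ∀ z : ℤ, D ∣ z - ((z % d).toNat : ℤ) := by
            intro z
            have h0 := Int.emod_nonneg z hd'.ne'
            rw [Int.toNat_of_nonneg h0]
            have h1 : (d:ℤ) ∣ z - z % d := Int.dvd_self_sub_of_emod_eq rfl
            exact Int.natAbs_dvd.1 h1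
          fin_cases k
          · simpa [neg_add_eq_sub] using hdvd (x 0)
          · simpa [neg_add_eq_sub] using hdvd (x 1)
    have : Finite ((Fin 2 → ℤ) ⧸ M.toAddSubgroup) := Finite.of_surjective _ hsurj
    exact AddSubgroup.finiteIndex_of_finite_quotient
  · -- p-torsion free
    intro x hx
    have hprime : Prime ((p : ℤ)) := Int.prime_iff_natAbs_prime.2 (by simpa using hp)
    have hcop : IsCoprime ((p:ℤ)) D := (Prime.coprime_iff_not_dvd hprime).2 hpD
    obtain ⟨s, t, hst⟩ := hcop
    have hxeq : x = s • ((p:ℤ) • x) + t • (D • x) := by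
      funext k
      simp only [Pi.add_apply, Pi.smul_apply, smul_eq_mul]
      linear_combination (x k) * hst.symm
    rw [hxeq]
    exact M.add_mem (M.smul_mem s hx) (M.smul_mem t (hDsmul x))

/-- Combinatorial content of Proposition 4.1: under the hypothesis on the reductions
mod `p` of the primitive rays, there is a positive integral relation whose terms generate
a finite-index sublattice of `ℤ²` with `p`-torsion-free quotient (the Chen–Lian–Tseng
criterion for separable Campana rational connectedness). -/
theorem stmt5 (p : ℕ) (hp : p.Prime) (n : ℕ) (ρ : Fin n → (Fin 2 → ℤ))
    (hprim : ∀ i, Int.gcd (ρ i 0) (ρ i 1) = 1)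
    (hb : ∃ b : Fin n → ℤ, (∀ i, 0 < b i) ∧ ∑ i, b i • ρ i = 0)
    (hA : ∃ m l : Fin n, m ≠ l ∧
      LinearIndependent (ZMod p) ![redMod p ρ m, redMod p ρ l] ∧
      Submodule.span (ZMod p) {redMod p ρ m, redMod p ρ l} =
        Submodule.span (ZMod p) (Set.range (redMod p ρ)) ∧
      ((∃ k : Fin n, ∃ a b : ZMod p, a ≠ 0 ∧ b ≠ 0 ∧
          redMod p ρ k = a • redMod p ρ m + b • redMod p ρ l) ∨
       ((∃ s : Fin n, s ≠ m ∧ ∃ a : ZMod p, a ≠ 0 ∧ redMod p ρ s = a • redMod p ρ m) ∧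
        (∃ t : Fin n, t ≠ l ∧ ∃ b : ZMod p, b ≠ 0 ∧ redMod p ρ t = b • redMod p ρ l)))) :
    ∃ c : Fin n → ℤ, (∀ k, 0 < c k) ∧ ∑ k, c k • ρ k = 0 ∧
      (Submodule.span ℤ (Set.range fun k => c k • ρ k)).toAddSubgroup.FiniteIndex ∧
      ∀ x : Fin 2 → ℤ, (p : ℤ) • x ∈ Submodule.span ℤ (Set.range fun k => c k • ρ k) →
        x ∈ Submodule.span ℤ (Set.range fun k => c k • ρ k) := by
  haveI : Fact p.Prime := ⟨hp⟩
  obtain ⟨b, hbpos, hbrel⟩ := hb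
  obtain ⟨m, l, hml, hLI, -, hcase⟩ := hA
  -- the determinant of the chosen basis pair is nonzero mod p
  have hdp : ((ρ m 0 * ρ l 1 - ρ m 1 * ρ l 0 : ℤ) : ZMod p) ≠ 0 := by
    have h := pair_det_ne (redMod p ρ m) (redMod p ρ l) hLI
    intro h0; apply h
    have e : redMod p ρ m 0 * redMod p ρ l 1 - redMod p ρ m 1 * redMod p ρ l 0
        = ((ρ m 0 * ρ l 1 - ρ m 1 * ρ l 0 : ℤ) : ZMod p) := by
      simp only [redMod]; push_cast; ring
    rw [e, h0]
  -- produce c together with a pair of indices whose determinant is prime to p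
  suffices h : ∃ c : Fin n → ℤ, (∀ k, 0 < c k) ∧ (∑ k, c k • ρ k = 0) ∧
      ∃ i j : Fin n,
        ((c i * c j * (ρ i 0 * ρ j 1 - ρ i 1 * ρ j 0) : ℤ) : ZMod p) ≠ 0 by
    obtain ⟨c, hcpos, hcrel, i, j, hdet⟩ := h
    obtain ⟨h1, h2⟩ := final p hp ρ c hcpos hcrel i j hdet
    exact ⟨c, hcpos, hcrel, h1, h2⟩
  rcases hcase with ⟨k, a, bb, ha, hbb, hk⟩ | ⟨⟨s, hsm, a, ha, hs⟩, ⟨t, htl, bb, hbb, ht⟩⟩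
  · -- case (b1)
    have hk0 : ((ρ k 0 : ℤ) : ZMod p)
        = a * ((ρ m 0 : ℤ) : ZMod p) + bb * ((ρ l 0 : ℤ) : ZMod p) := by
      simpa [redMod, smul_eq_mul] using congrFun hk 0
    have hk1 : ((ρ k 1 : ℤ) : ZMod p)
        = a * ((ρ m 1 : ℤ) : ZMod p) + bb * ((ρ l 1 : ℤ) : ZMod p) := by
      simpa [redMod, smul_eq_mul] using congrFun hk 1
    have hα : ((ρ k 0 * ρ l 1 - ρ k 1 * ρ l 0 : ℤ) : ZMod p)
        = a * ((ρ m 0 * ρ l 1 - ρ m 1 * ρ l 0 : ℤ) : ZMod p) := by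
      push_cast; rw [hk0, hk1]; ring
    have hβ : ((ρ m 0 * ρ k 1 - ρ m 1 * ρ k 0 : ℤ) : ZMod p)
        = bb * ((ρ m 0 * ρ l 1 - ρ m 1 * ρ l 0 : ℤ) : ZMod p) := by
      push_cast; rw [hk0, hk1]; ring
    have hkm : k ≠ m := by
      intro h; rw [h] at hβ
      have e : ((ρ m 0 * ρ m 1 - ρ m 1 * ρ m 0 : ℤ) : ZMod p) = 0 := by push_cast; ring
      rw [e] at hβ
      rcases mul_eq_zero.1 hβ.symm with h1 | h1
      exacts [hbb h1, hdp h1]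
    have hkl : k ≠ l := by
      intro h; rw [h] at hα
      have e : ((ρ l 0 * ρ l 1 - ρ l 1 * ρ l 0 : ℤ) : ZMod p) = 0 := by push_cast; ring
      rw [e] at hα
      rcases mul_eq_zero.1 hα.symm with h1 | h1
      exacts [ha h1, hdp h1]
    set d : ℤ := ρ m 0 * ρ l 1 - ρ m 1 * ρ l 0 with hddef
    set α : ℤ := ρ k 0 * ρ l 1 - ρ k 1 * ρ l 0 with hαdef
    set β : ℤ := ρ m 0 * ρ k 1 - ρ m 1 * ρ k 0 with hβdef
    set r : Fin n → ℤ := fun i =>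
      (if i = k then d else 0) + (if i = m then -α else 0) + (if i = l then -β else 0)
      with hrdef
    have hrrel : ∑ i, r i • ρ i = 0 := by
      have hsum : ∑ i, r i • ρ i
          = d • ρ k + (-α) • ρ m + (-β) • ρ l := by
        simp only [hrdef, add_smul, Finset.sum_add_distrib, ite_smul, zero_smul,
          Finset.sum_ite_eq', Finset.mem_univ, if_true]
      rw [hsum, hddef, hαdef, hβdef, cramer2 (ρ m) (ρ l) (ρ k)]
      module
    have habs : ∀ (x : ℤ) (i j : Fin n), |if i = j then x else 0| ≤ |x| := by
      intro x i j; split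
      · exact le_refl _
      · simpa using abs_nonneg x
    have hS : ∀ i, |r i| ≤ |d| + |α| + |β| := by
      intro i
      have e1 := abs_add_le ((if i = k then d else 0) + (if i = m then -α else 0))
        (if i = l then -β else 0)
      have e2 := abs_add_le (if i = k then d else 0) (if i = m then -α else 0)
      have h1 := habs d i k
      have h2 := habs (-α) i m
      have h3 := habs (-β) i l
      rw [abs_neg] at h2 h3
      show |(if i = k then d else 0) + (if i = m then -α else 0)
        + (if i = l then -β else 0)| ≤ |d| + |α| + |β|
      linarith
    obtain ⟨c, hcpos, hcrel, hcmod⟩ :=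
      construct p hp.pos ρ b hbpos hbrel r hrrel (|d| + |α| + |β|) hS
    refine ⟨c, hcpos, hcrel, k, m, ?_⟩
    have hmk : m ≠ k := fun h => hkm h.symm
    have hrk : r k = d := by simp [hrdef, hkm, hkl]
    have hrm : r m = -α := by simp [hrdef, hmk, hml]
    have hck : ((c k : ℤ) : ZMod p) = ((d : ℤ) : ZMod p) := by rw [hcmod k, hrk]
    have hcm : ((c m : ℤ) : ZMod p) = -((α : ℤ) : ZMod p) := by
      rw [hcmod m, hrm]; push_cast; ring
    have hdet2 : ((ρ k 0 * ρ m 1 - ρ k 1 * ρ m 0 : ℤ) : ZMod p)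
        = -(bb * ((d : ℤ) : ZMod p)) := by
      rw [hddef]; push_cast; rw [hk0, hk1]; ring
    have : ((c k * c m * (ρ k 0 * ρ m 1 - ρ k 1 * ρ m 0) : ℤ) : ZMod p)
        = a * bb * (((d:ℤ):ZMod p) * ((d:ℤ):ZMod p) * ((d:ℤ):ZMod p)) := by
      push_cast
      rw [show ((c k : ℤ) : ZMod p) * ((c m : ℤ) : ZMod p)
            * ((ρ k 0 : ZMod p) * (ρ m 1 : ZMod p) - (ρ k 1 : ZMod p) * (ρ m 0 : ZMod p))
          = ((c k : ℤ) : ZMod p) * ((c m : ℤ) : ZMod p)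
            * ((ρ k 0 * ρ m 1 - ρ k 1 * ρ m 0 : ℤ) : ZMod p) from by push_cast; ring]
      rw [hck, hcm, hdet2, hα]
      ring
    rw [this]
    exact mul_ne_zero (mul_ne_zero ha hbb)
      (mul_ne_zero (mul_ne_zero hdp hdp) hdp)
  · -- case (b2)
    have hs0 : ((ρ s 0 : ℤ) : ZMod p) = a * ((ρ m 0 : ℤ) : ZMod p) := by
      simpa [redMod, smul_eq_mul] using congrFun hs 0
    have hs1 : ((ρ s 1 : ℤ) : ZMod p) = a * ((ρ m 1 : ℤ) : ZMod p) := by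
      simpa [redMod, smul_eq_mul] using congrFun hs 1
    have ht0 : ((ρ t 0 : ℤ) : ZMod p) = bb * ((ρ l 0 : ℤ) : ZMod p) := by
      simpa [redMod, smul_eq_mul] using congrFun ht 0
    have ht1 : ((ρ t 1 : ℤ) : ZMod p) = bb * ((ρ l 1 : ℤ) : ZMod p) := by
      simpa [redMod, smul_eq_mul] using congrFun ht 1
    have hα1 : ((ρ s 0 * ρ l 1 - ρ s 1 * ρ l 0 : ℤ) : ZMod p)
        = a * ((ρ m 0 * ρ l 1 - ρ m 1 * ρ l 0 : ℤ) : ZMod p) := by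
      push_cast; rw [hs0, hs1]; ring
    have hβ1 : ((ρ m 0 * ρ s 1 - ρ m 1 * ρ s 0 : ℤ) : ZMod p) = 0 := by
      push_cast; rw [hs0, hs1]; ring
    have hα2 : ((ρ t 0 * ρ l 1 - ρ t 1 * ρ l 0 : ℤ) : ZMod p) = 0 := by
      push_cast; rw [ht0, ht1]; ring
    have hβ2 : ((ρ m 0 * ρ t 1 - ρ m 1 * ρ t 0 : ℤ) : ZMod p)
        = bb * ((ρ m 0 * ρ l 1 - ρ m 1 * ρ l 0 : ℤ) : ZMod p) := by
      push_cast; rw [ht0, ht1]; ring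
    have hsl : s ≠ l := by
      intro h; rw [h] at hα1
      have e : ((ρ l 0 * ρ l 1 - ρ l 1 * ρ l 0 : ℤ) : ZMod p) = 0 := by push_cast; ring
      rw [e] at hα1
      rcases mul_eq_zero.1 hα1.symm with h1 | h1
      exacts [ha h1, hdp h1]
    have htm : t ≠ m := by
      intro h; rw [h] at hβ2
      have e : ((ρ m 0 * ρ m 1 - ρ m 1 * ρ m 0 : ℤ) : ZMod p) = 0 := by push_cast; ring
      rw [e] at hβ2
      rcases mul_eq_zero.1 hβ2.symm with h1 | h1
      exacts [hbb h1, hdp h1]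
    set d : ℤ := ρ m 0 * ρ l 1 - ρ m 1 * ρ l 0 with hddef
    set α1 : ℤ := ρ s 0 * ρ l 1 - ρ s 1 * ρ l 0 with hα1def
    set β1 : ℤ := ρ m 0 * ρ s 1 - ρ m 1 * ρ s 0 with hβ1def
    set α2 : ℤ := ρ t 0 * ρ l 1 - ρ t 1 * ρ l 0 with hα2def
    set β2 : ℤ := ρ m 0 * ρ t 1 - ρ m 1 * ρ t 0 with hβ2def
    set r : Fin n → ℤ := fun i =>
      (if i = s then d else 0) + (if i = t then d else 0)
        + (if i = m then -(α1 + α2) else 0) + (if i = l then -(β1 + β2) else 0)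
      with hrdef
    have hrrel : ∑ i, r i • ρ i = 0 := by
      have hsum : ∑ i, r i • ρ i
          = d • ρ s + d • ρ t + (-(α1 + α2)) • ρ m + (-(β1 + β2)) • ρ l := by
        simp only [hrdef, add_smul, Finset.sum_add_distrib, ite_smul, zero_smul,
          Finset.sum_ite_eq', Finset.mem_univ, if_true]
      rw [hsum, hddef, hα1def, hβ1def, hα2def, hβ2def,
        cramer2 (ρ m) (ρ l) (ρ s), cramer2 (ρ m) (ρ l) (ρ t)]
      module
    have habs : ∀ (x : ℤ) (i j : Fin n), |if i = j then x else 0| ≤ |x| := by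
      intro x i j; split
      · exact le_refl _
      · simpa using abs_nonneg x
    have hS : ∀ i, |r i| ≤ |d| + |d| + |α1 + α2| + |β1 + β2| := by
      intro i
      have e1 := abs_add_le ((if i = s then d else 0) + (if i = t then d else 0)
          + (if i = m then -(α1+α2) else 0))
        (if i = l then -(β1+β2) else 0)
      have e2 := abs_add_le ((if i = s then d else 0) + (if i = t then d else 0))
        (if i = m then -(α1+α2) else 0)
      have e3 := abs_add_le (if i = s then d else 0) (if i = t then d else 0)
      have h1 := habs d i s
      have h1' := habs d i t
      have h2 := habs (-(α1+α2)) i m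
      have h3 := habs (-(β1+β2)) i l
      rw [abs_neg] at h2 h3
      show |(if i = s then d else 0) + (if i = t then d else 0)
        + (if i = m then -(α1+α2) else 0) + (if i = l then -(β1+β2) else 0)|
        ≤ |d| + |d| + |α1 + α2| + |β1 + β2|
      linarith
    obtain ⟨c, hcpos, hcrel, hcmod⟩ :=
      construct p hp.pos ρ b hbpos hbrel r hrrel (|d| + |d| + |α1 + α2| + |β1 + β2|) hS
    refine ⟨c, hcpos, hcrel, m, l, ?_⟩
    have hms : m ≠ s := fun h => hsm h.symm
    have hmt : m ≠ t := fun h => htm h.symm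
    have hls : l ≠ s := fun h => hsl h.symm
    have hlt : l ≠ t := fun h => htl h.symm
    have hlm : l ≠ m := fun h => hml h.symm
    have hrm : r m = -(α1 + α2) := by simp [hrdef, hms, hmt, hml]
    have hrl : r l = -(β1 + β2) := by simp [hrdef, hls, hlt, hlm]
    have hcm : ((c m : ℤ) : ZMod p) = -(a * ((d : ℤ) : ZMod p)) := by
      rw [hcmod m, hrm]
      push_cast
      rw [show (-(((α1:ℤ):ZMod p) + ((α2:ℤ):ZMod p)) : ZMod p)
          = -(((α1:ℤ):ZMod p) + ((α2:ℤ):ZMod p)) from rfl]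
      rw [hα1def, hα2def] at *
      rw [hα1, hα2]
      ring
    have hcl : ((c l : ℤ) : ZMod p) = -(bb * ((d : ℤ) : ZMod p)) := by
      rw [hcmod l, hrl]
      push_cast
      rw [hβ1, hβ2]
      ring
    have : ((c m * c l * (ρ m 0 * ρ l 1 - ρ m 1 * ρ l 0) : ℤ) : ZMod p)
        = a * bb * (((d:ℤ):ZMod p) * ((d:ℤ):ZMod p) * ((d:ℤ):ZMod p)) := by
      push_cast
      rw [show ((c m : ℤ) : ZMod p) * ((c l : ℤ) : ZMod p)
            * ((ρ m 0 : ZMod p) * (ρ l 1 : ZMod p) - (ρ m 1 : ZMod p) * (ρ l 0 : ZMod p))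
          = ((c m : ℤ) : ZMod p) * ((c l : ℤ) : ZMod p) * ((d : ℤ) : ZMod p) from by
        rw [hddef]; push_cast; ring]
      rw [hcm, hcl]
      ring
    rw [this]
    exact mul_ne_zero (mul_ne_zero ha hbb)
      (mul_ne_zero (mul_ne_zero hdp hdp) hdp)
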